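/- Let κ > 0 and let P be an n×n orthogonal projection. For k ∈ ℝ set U(k) := I + (2iκ/(k − iκ))·P. Then U(k) is unitary, with U(k)† = U(k)⁻¹ = I − (2iκ/(k + iκ))·P. Consequently, if J, J̃ : ℝ → M_n(ℂ) satisfy J̃(k) = U(k)·J(k) for all k ∈ ℝ, then: (i) J̃(k)†·J̃(k) = J(k)†·J(k) for all k ∈ ℝ; and (ii) for every k ∈ ℝ such that J(k) is invertible, the scattering matrices S(k) := −J(−k)·J(k)⁻¹ and S̃(k) := −J̃(−k)·J̃(k)⁻¹ satisfy S̃(k) = [I − (2iκ/(k+iκ))·P]·S(k)·[I − (2iκ/(k+iκ))·P]. (Theorem 6.4(b) and (e): the continuous part of the spectral measure is unchanged, and the transformation of the scattering matrix under removal of the bound state at k = iκ_N.) -/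

import Mathlib

open Matrix

/-- Theorem 6.4(b) and (e): for `κ > 0` and an orthogonal projection `P`, the matrix
`U(k) = I + (2iκ/(k − iκ))·P` (for `k ∈ ℝ`) is unitary with
`U(k)† = U(k)⁻¹ = I − (2iκ/(k + iκ))·P`.  Consequently, if `J̃(k) = U(k)·J(k)` then
`J̃(k)†J̃(k) = J(k)†J(k)` for all real `k`, and whenever `J(k)` is invertible the
scattering matrices `S(k) = −J(−k)J(k)⁻¹` and `S̃(k) = −J̃(−k)J̃(k)⁻¹` satisfy
`S̃(k) = [I − (2iκ/(k+iκ))P]·S(k)·[I − (2iκ/(k+iκ))P]`. -/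
theorem jost_scattering_transform_remove_bound_state {n : ℕ}
    (κ : ℝ) (hκ : 0 < κ)
    (P : Matrix (Fin n) (Fin n) ℂ)
    (hPproj : P * P = P) (hPherm : Pᴴ = P)
    (J Jt : ℝ → Matrix (Fin n) (Fin n) ℂ)
    (hJt : ∀ k : ℝ,
      Jt k = (1 + ((2 * Complex.I * (κ:ℂ)) / ((k:ℂ) - Complex.I * (κ:ℂ))) • P) * J k) :
    (∀ k : ℝ,
      (1 + ((2 * Complex.I * (κ:ℂ)) / ((k:ℂ) - Complex.I * (κ:ℂ))) • P)ᴴ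
          = 1 - ((2 * Complex.I * (κ:ℂ)) / ((k:ℂ) + Complex.I * (κ:ℂ))) • P ∧
      (1 + ((2 * Complex.I * (κ:ℂ)) / ((k:ℂ) - Complex.I * (κ:ℂ))) • P) *
          (1 - ((2 * Complex.I * (κ:ℂ)) / ((k:ℂ) + Complex.I * (κ:ℂ))) • P) = 1 ∧
      (1 - ((2 * Complex.I * (κ:ℂ)) / ((k:ℂ) + Complex.I * (κ:ℂ))) • P) *
          (1 + ((2 * Complex.I * (κ:ℂ)) / ((k:ℂ) - Complex.I * (κ:ℂ))) • P) = 1) ∧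
    (∀ k : ℝ, (Jt k)ᴴ * Jt k = (J k)ᴴ * J k) ∧
    (∀ k : ℝ, IsUnit (J k) →
      -(Jt (-k)) * (Jt k)⁻¹
        = (1 - ((2 * Complex.I * (κ:ℂ)) / ((k:ℂ) + Complex.I * (κ:ℂ))) • P) *
            (-(J (-k)) * (J k)⁻¹) *
            (1 - ((2 * Complex.I * (κ:ℂ)) / ((k:ℂ) + Complex.I * (κ:ℂ))) • P)) := by
  have hκ0 : (κ:ℂ) ≠ 0 := by exact_mod_cast hκ.ne'
  have hne : ∀ k : ℝ, (k:ℂ) - Complex.I * κ ≠ 0 := by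
    intro k h
    have := congrArg Complex.im h
    simp at this
    linarith
  have hne' : ∀ k : ℝ, (k:ℂ) + Complex.I * κ ≠ 0 := by
    intro k h
    have := congrArg Complex.im h
    simp at this
    linarith
  -- scalar identities
  have hconj : ∀ k : ℝ, star (2 * Complex.I * (κ:ℂ) / ((k:ℂ) - Complex.I * κ))
      = -(2 * Complex.I * (κ:ℂ) / ((k:ℂ) + Complex.I * κ)) := by
    intro k
    simp only [star_div₀, star_mul', star_sub, Complex.star_def, Complex.conj_I,
      Complex.conj_ofReal, map_ofNat, sub_neg_eq_add]
    field_simp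
    rw [sub_neg_eq_add]
  have hsc : ∀ k : ℝ,
      (2 * Complex.I * (κ:ℂ) / ((k:ℂ) - Complex.I * κ))
        - (2 * Complex.I * (κ:ℂ) / ((k:ℂ) + Complex.I * κ))
        - (2 * Complex.I * (κ:ℂ) / ((k:ℂ) - Complex.I * κ))
          * (2 * Complex.I * (κ:ℂ) / ((k:ℂ) + Complex.I * κ)) = 0 := by
    intro k
    field_simp [hne k, hne' k]
    ring
  have expand : ∀ x y : ℂ, (1 + x • P) * (1 - y • P) = 1 + (x - y - x * y) • P := by
    intro x y
    simp only [mul_sub, add_mul, mul_add, sub_mul, mul_one, one_mul, smul_mul_assoc,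
      mul_smul_comm, smul_smul, hPproj]
    module
  have expand' : ∀ x y : ℂ, (1 - y • P) * (1 + x • P) = 1 + (x - y - x * y) • P := by
    intro x y
    simp only [mul_sub, add_mul, mul_add, sub_mul, mul_one, one_mul, smul_mul_assoc,
      mul_smul_comm, smul_smul, hPproj]
    module
  have hUV : ∀ k : ℝ,
      (1 + (2 * Complex.I * (κ:ℂ) / ((k:ℂ) - Complex.I * κ)) • P) *
        (1 - (2 * Complex.I * (κ:ℂ) / ((k:ℂ) + Complex.I * κ)) • P) = 1 := by
    intro k; rw [expand, hsc k]; simp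
  have hVU : ∀ k : ℝ,
      (1 - (2 * Complex.I * (κ:ℂ) / ((k:ℂ) + Complex.I * κ)) • P) *
        (1 + (2 * Complex.I * (κ:ℂ) / ((k:ℂ) - Complex.I * κ)) • P) = 1 := by
    intro k; rw [expand', hsc k]; simp
  have hH : ∀ k : ℝ,
      (1 + (2 * Complex.I * (κ:ℂ) / ((k:ℂ) - Complex.I * κ)) • P)ᴴ
        = 1 - (2 * Complex.I * (κ:ℂ) / ((k:ℂ) + Complex.I * κ)) • P := by
    intro k
    rw [conjTranspose_add, conjTranspose_smul, conjTranspose_one, hPherm, hconj k,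
      neg_smul, ← sub_eq_add_neg]
  have hJtm : ∀ k : ℝ, Jt (-k)
      = (1 - (2 * Complex.I * (κ:ℂ) / ((k:ℂ) + Complex.I * κ)) • P) * J (-k) := by
    intro k
    rw [hJt (-k)]
    have h1 : (((-k:ℝ)):ℂ) - Complex.I * κ = -((k:ℂ) + Complex.I * κ) := by
      push_cast; ring
    rw [h1, div_neg, neg_smul, ← sub_eq_add_neg]
  refine ⟨fun k => ⟨hH k, hUV k, hVU k⟩, ?_, ?_⟩
  · intro k
    rw [hJt k, conjTranspose_mul, hH k, mul_assoc, ← mul_assoc _ _ (J k), hVU k, one_mul]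
  · intro k hJk
    have hinv : (Jt k)⁻¹ = (J k)⁻¹ *
        (1 - (2 * Complex.I * (κ:ℂ) / ((k:ℂ) + Complex.I * κ)) • P) := by
      apply Matrix.inv_eq_right_inv
      rw [hJt k, mul_assoc, ← mul_assoc (J k),
        Matrix.mul_nonsing_inv (J k) ((Matrix.isUnit_iff_isUnit_det (J k)).mp hJk),
        one_mul, hUV k]
    rw [hinv, hJtm k]
    simp only [neg_mul, mul_neg, mul_assoc]
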